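/- Let d ∈ {2,3}. There exists a constant C > 0 (depending only on d and the ambient dimension n) such that for all bounded continuously differentiable functions u, v : ℝⁿ → ℂ with bounded derivatives and every coordinate direction i: ‖∂_i(|u|^{4/d} u) − ∂_i(|v|^{4/d} v)‖_{L²(ℝⁿ)} ≤ C [ ‖∂_i(u − v)‖_{L²(ℝⁿ)} ‖u‖_{L^∞}^{4/d} + ‖∂_i v‖_{L²(ℝⁿ)} ‖u − v‖_{L^∞} (‖u‖_{L^∞} + ‖v‖_{L^∞})^{4/d − 1} ], where norms on the left and the L² norms on the right are allowed to be +∞. -/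

import Mathlib

open MeasureTheory Real

noncomputable section

namespace CritAux

/-- The real-linear functional `w ↦ re (conj z * w)` on `ℂ`. -/
def ell (z : ℂ) : ℂ →L[ℝ] ℝ :=
  Complex.reCLM.comp (((ContinuousLinearMap.mul ℂ ℂ) ((starRingEnd ℂ) z)).restrictScalars ℝ)

lemma ell_apply (z w : ℂ) : ell z w = z.re * w.re + z.im * w.im := by
  simp [ell, Complex.mul_re]

lemma abs_ell_le (z w : ℂ) : |ell z w| ≤ ‖z‖ * ‖w‖ := by
  have h : ell z w = ((starRingEnd ℂ) z * w).re := rfl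
  rw [h]
  calc |((starRingEnd ℂ) z * w).re| ≤ ‖(starRingEnd ℂ) z * w‖ := Complex.abs_re_le_norm _
  _ = ‖z‖ * ‖w‖ := by rw [norm_mul, RCLike.norm_conj]

lemma ell_sub (a b w : ℂ) : ell (a - b) w = ell a w - ell b w := by
  simp [ell_apply]; ring

/-- Candidate derivative of `z ↦ ‖z‖^p • z`. -/
def D (p : ℝ) (z : ℂ) : ℂ →L[ℝ] ℂ :=
  (‖z‖ ^ p) • ContinuousLinearMap.id ℝ ℂ + ((p * ‖z‖ ^ (p - 2)) • ell z).smulRight z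

lemma D_apply (p : ℝ) (z w : ℂ) :
    D p z w = (‖z‖ ^ p) • w + ((p * ‖z‖ ^ (p - 2)) * ell z w) • z := by
  simp [D, ContinuousLinearMap.smulRight_apply, smul_smul]

lemma D_zero (p : ℝ) (hp : p ≠ 0) : D p 0 = 0 := by
  ext w
  simp [D_apply, Real.zero_rpow hp]

lemma hasFDerivAt_smul_norm_rpow (p : ℝ) (hp1 : 1 ≤ p) (z : ℂ) :
    HasFDerivAt (fun y : ℂ => (‖y‖ ^ p) • y) (D p z) z := by
  rcases eq_or_ne z 0 with rfl | hz
  · rw [D_zero p (by linarith)]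
    rw [hasFDerivAt_iff_isLittleO_nhds_zero]
    have hfun : (fun h : ℂ => (‖(0:ℂ) + h‖ ^ p) • ((0:ℂ) + h) - (‖(0:ℂ)‖ ^ p) • (0:ℂ)
        - (0 : ℂ →L[ℝ] ℂ) h) = fun h : ℂ => (‖h‖ ^ p) • h := by
      funext h; simp
    rw [hfun, Asymptotics.isLittleO_iff]
    intro c hc
    have hcp : (0:ℝ) < c ^ (1/p) := Real.rpow_pos_of_pos hc _
    filter_upwards [Metric.ball_mem_nhds (0:ℂ) hcp] with h hh
    rw [Metric.mem_ball, dist_zero_right] at hh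
    have h1 : ‖(‖h‖ ^ p) • h‖ = ‖h‖ ^ p * ‖h‖ := by
      rw [norm_smul, Real.norm_eq_abs, abs_of_nonneg (Real.rpow_nonneg (norm_nonneg h) p)]
    rw [h1]
    have h2 : ‖h‖ ^ p ≤ c := by
      have := Real.rpow_le_rpow (norm_nonneg h) hh.le (by linarith : (0:ℝ) ≤ p)
      rwa [← Real.rpow_mul hc.le, one_div, inv_mul_cancel₀ (by linarith : p ≠ 0),
        Real.rpow_one] at this
    exact mul_le_mul_of_nonneg_right h2 (norm_nonneg h)
  · have hns : 0 < Complex.normSq z := Complex.normSq_pos.mpr hz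
    have h1 : HasFDerivAt Complex.normSq ((2:ℝ) • ell z) z := by
      have hre := Complex.reCLM.hasFDerivAt (x := z)
      have him := Complex.imCLM.hasFDerivAt (x := z)
      have h := (hre.mul hre).add (him.mul him)
      have hfun : (fun y : ℂ => Complex.reCLM y * Complex.reCLM y
          + Complex.imCLM y * Complex.imCLM y) = Complex.normSq := by
        funext y; simp [Complex.normSq_apply]
      rw [show (⇑Complex.reCLM * ⇑Complex.reCLM + ⇑Complex.imCLM * ⇑Complex.imCLM : ℂ → ℝ)
          = Complex.normSq from hfun] at h
      refine h.congr_fderiv ?_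
      ext w
      simp [ell_apply]
      ring
    have h2 : HasFDerivAt (fun y => Complex.normSq y ^ (p/2))
        (((p/2) * Complex.normSq z ^ (p/2 - 1)) • ((2:ℝ) • ell z)) z :=
      h1.rpow_const (Or.inl hns.ne')
    have hfun2 : (fun y : ℂ => Complex.normSq y ^ (p/2)) = fun y : ℂ => ‖y‖ ^ p := by
      funext y
      rw [Complex.normSq_eq_norm_sq, ← Real.rpow_natCast ‖y‖ 2,
        ← Real.rpow_mul (norm_nonneg y)]
      congr 1
      push_cast
      ring
    have hder : ((p/2) * Complex.normSq z ^ (p/2 - 1)) • ((2:ℝ) • ell z)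
        = (p * ‖z‖ ^ (p - 2)) • ell z := by
      rw [smul_smul]
      congr 1
      rw [Complex.normSq_eq_norm_sq, ← Real.rpow_natCast ‖z‖ 2,
        ← Real.rpow_mul (norm_nonneg z)]
      have h22 : (2:ℝ) * (p/2 - 1) = p - 2 := by ring
      push_cast
      rw [h22]
      ring
    rw [hfun2, hder] at h2
    exact h2.smul (hasFDerivAt_id z)

lemma hasFDerivAt_F (p : ℝ) (hp1 : 1 ≤ p) (z : ℂ) :
    HasFDerivAt (fun y : ℂ => ((‖y‖ ^ p : ℝ) : ℂ) * y) (D p z) z := by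
  have h := hasFDerivAt_smul_norm_rpow p hp1 z
  simpa only [Complex.real_smul] using h

lemma norm_D_apply_le (p : ℝ) (hp1 : 1 ≤ p) (hp2 : p ≤ 2) (z w : ℂ) :
    ‖D p z w‖ ≤ 3 * (‖z‖ ^ p * ‖w‖) := by
  rcases eq_or_ne z 0 with rfl | hz
  · rw [D_zero p (by linarith)]
    simp
    positivity
  · have hzpos : 0 < ‖z‖ := norm_pos_iff.mpr hz
    rw [D_apply]
    have key : ‖z‖ ^ (p-2) * (‖z‖ * ‖z‖) = ‖z‖ ^ p := by
      have e : ‖z‖ ^ (p-2) * (‖z‖ * ‖z‖) = ‖z‖ ^ (p-2) * ‖z‖ * ‖z‖ := by ring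
      rw [e, ← Real.rpow_add_one hzpos.ne' (p-2), ← Real.rpow_add_one hzpos.ne' (p-2+1)]
      congr 1
      ring
    have h1 : ‖(‖z‖ ^ p) • w‖ = ‖z‖ ^ p * ‖w‖ := by
      rw [norm_smul, Real.norm_eq_abs, abs_of_nonneg (Real.rpow_nonneg (norm_nonneg z) p)]
    have h2 : ‖((p * ‖z‖ ^ (p - 2)) * ell z w) • z‖ ≤ 2 * (‖z‖ ^ p * ‖w‖) := by
      rw [norm_smul, Real.norm_eq_abs, abs_mul, abs_mul,
        abs_of_nonneg (by positivity : (0:ℝ) ≤ p),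
        abs_of_nonneg (Real.rpow_nonneg (norm_nonneg z) _)]
      calc p * ‖z‖ ^ (p-2) * |ell z w| * ‖z‖
          ≤ p * ‖z‖ ^ (p-2) * (‖z‖ * ‖w‖) * ‖z‖ := by
            have h := abs_ell_le z w
            have hnn : (0:ℝ) ≤ p * ‖z‖ ^ (p-2) := by positivity
            exact mul_le_mul_of_nonneg_right
              (mul_le_mul_of_nonneg_left h hnn) (norm_nonneg z)
      _ = p * (‖z‖ ^ (p-2) * (‖z‖ * ‖z‖)) * ‖w‖ := by ring
      _ = p * (‖z‖ ^ p) * ‖w‖ := by rw [key]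
      _ ≤ 2 * (‖z‖ ^ p * ‖w‖) := by
            nlinarith [mul_le_mul_of_nonneg_right hp2
              (mul_nonneg (Real.rpow_nonneg (norm_nonneg z) p) (norm_nonneg w))]
    calc ‖(‖z‖ ^ p) • w + ((p * ‖z‖ ^ (p - 2)) * ell z w) • z‖
        ≤ ‖(‖z‖ ^ p) • w‖ + ‖((p * ‖z‖ ^ (p - 2)) * ell z w) • z‖ := norm_add_le _ _
    _ ≤ ‖z‖ ^ p * ‖w‖ + 2 * (‖z‖ ^ p * ‖w‖) := by rw [h1]; linarith
    _ = 3 * (‖z‖ ^ p * ‖w‖) := by ring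

lemma rpow_sub_rpow_le (p : ℝ) (hp1 : 1 ≤ p) {s t : ℝ} (hs : 0 ≤ s) (hst : s ≤ t) :
    t ^ p - s ^ p ≤ p * t ^ (p-1) * (t - s) := by
  rcases eq_or_lt_of_le (hs.trans hst) with h0 | ht
  · have hs0 : s = 0 := le_antisymm (hst.trans h0.symm.le) hs
    subst hs0
    rw [← h0]
    simp
  · set x := s / t with hxdef
    have hx0 : 0 ≤ x := div_nonneg hs ht.le
    have hb := one_add_mul_self_le_rpow_one_add (show (-1:ℝ) ≤ x - 1 by linarith) hp1
    have hxx : (1:ℝ) + (x - 1) = x := by ring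
    rw [hxx] at hb
    have hsx : s = x * t := by rw [hxdef, div_mul_cancel₀ s ht.ne']
    have hsp : s ^ p = x ^ p * t ^ p := by rw [hsx, Real.mul_rpow hx0 ht.le]
    have htp : t ^ p = t ^ (p-1) * t := by
      rw [← Real.rpow_add_one ht.ne' (p-1)]; norm_num
    have h1 : t ^ p - s ^ p = t ^ p * (1 - x ^ p) := by rw [hsp]; ring
    have h2 : t ^ p * (1 - x ^ p) ≤ t ^ p * (p * (1 - x)) := by
      apply mul_le_mul_of_nonneg_left _ (Real.rpow_nonneg ht.le p)
      linarith
    have h3 : t * (1 - x) = t - s := by rw [hsx]; ring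
    calc t ^ p - s ^ p ≤ t ^ p * (p * (1-x)) := by rw [h1]; exact h2
    _ = p * t ^ (p-1) * (t * (1 - x)) := by rw [htp]; ring
    _ = p * t ^ (p-1) * (t - s) := by rw [h3]

lemma rpow_neg_sub_le (p : ℝ) (hp1 : 1 ≤ p) (hp2 : p ≤ 2) {s t : ℝ}
    (hs : 0 < s) (hst : s ≤ t) :
    (s ^ (p-2) - t ^ (p-2)) * (s * s) ≤ (s + t) ^ (p-1) * (t - s) := by
  have ht : 0 < t := lt_of_lt_of_le hs hst
  set r : ℝ := 2 - p with hrdef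
  have hr0 : 0 ≤ r := by simp [hrdef]; linarith
  have hr1 : r ≤ 1 := by simp [hrdef]; linarith
  -- Bernoulli:
  set x : ℝ := t / s with hxdef
  have hx1 : 1 ≤ x := (one_le_div hs).mpr hst
  have hb := rpow_one_add_le_one_add_mul_self (show (-1:ℝ) ≤ x - 1 by linarith) hr0 hr1
  have hxx : (1:ℝ) + (x - 1) = x := by ring
  rw [hxx] at hb
  -- t^r ≤ s^r + r * s^(r-1) * (t - s)
  have htx : t = x * s := by rw [hxdef, div_mul_cancel₀ t hs.ne']
  have hA : 0 < s ^ r := Real.rpow_pos_of_pos hs r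
  have hB : 0 < t ^ r := Real.rpow_pos_of_pos ht r
  have hE : 0 ≤ s ^ (r-1) := Real.rpow_nonneg hs.le _
  have f2 : s ^ (r-1) * s = s ^ r := by
    rw [← Real.rpow_add_one hs.ne' (r-1)]; norm_num
  have f1 : t ^ r - s ^ r ≤ r * s ^ (r-1) * (t - s) := by
    have htr : t ^ r = x ^ r * s ^ r := by rw [htx, Real.mul_rpow (by linarith) hs.le]
    have h2 : x ^ r * s ^ r ≤ (1 + r * (x-1)) * s ^ r :=
      mul_le_mul_of_nonneg_right hb hA.le
    have h3 : (x - 1) * s = t - s := by rw [htx]; ring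
    calc t ^ r - s ^ r ≤ (1 + r * (x-1)) * s ^ r - s ^ r := by rw [htr]; linarith
    _ = r * s ^ (r-1) * ((x-1) * s) := by rw [← f2]; ring
    _ = r * s ^ (r-1) * (t - s) := by rw [h3]
  set T1 : ℝ := t ^ (p-1) with hT1def
  have hT1 : 0 ≤ T1 := Real.rpow_nonneg ht.le _
  have f4 : T1 * t ^ r = t := by
    rw [hT1def, ← Real.rpow_add ht]
    norm_num [hrdef]
  have f5 : T1 ≤ (s+t) ^ (p-1) :=
    Real.rpow_le_rpow ht.le (by linarith) (by linarith)
  have hG : 0 ≤ (s+t) ^ (p-1) := Real.rpow_nonneg (by linarith) _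
  have hts : 0 ≤ t - s := by linarith
  -- rewrite negative powers
  have hps : s ^ (p-2) = (s ^ r)⁻¹ := by
    rw [show p - 2 = -r by rw [hrdef]; ring, Real.rpow_neg hs.le]
  have hpt : t ^ (p-2) = (t ^ r)⁻¹ := by
    rw [show p - 2 = -r by rw [hrdef]; ring, Real.rpow_neg ht.le]
  rw [hps, hpt]
  have hinv : (s ^ r)⁻¹ - (t ^ r)⁻¹ = (t ^ r - s ^ r) / (s ^ r * t ^ r) := by
    field_simp
  rw [hinv, div_mul_eq_mul_div, div_le_iff₀ (by positivity)]
  -- key : (t^r - s^r) * (s*s) ≤ (s+t)^(p-1) * (t-s) * (s^r * t^r)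
  calc (t ^ r - s ^ r) * (s * s)
      ≤ (r * s ^ (r-1) * (t - s)) * (s * s) := by
        apply mul_le_mul_of_nonneg_right f1 (by positivity)
  _ = r * (t - s) * (s ^ (r-1) * s) * s := by ring
  _ = r * (t - s) * s ^ r * s := by rw [f2]
  _ ≤ r * (t - s) * s ^ r * t := by
        apply mul_le_mul_of_nonneg_left hst (by positivity)
  _ = r * (t - s) * s ^ r * (T1 * t ^ r) := by rw [f4]
  _ ≤ 1 * (t - s) * s ^ r * ((s+t) ^ (p-1) * t ^ r) := by
        have e1 : r * (t - s) * s ^ r * (T1 * t ^ r)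
            = (r * T1) * ((t - s) * s ^ r * t ^ r) := by ring
        have e2 : 1 * (t - s) * s ^ r * ((s+t) ^ (p-1) * t ^ r)
            = (1 * (s+t) ^ (p-1)) * ((t - s) * s ^ r * t ^ r) := by ring
        rw [e1, e2]
        have h5 : r * T1 ≤ 1 * (s+t) ^ (p-1) :=
          mul_le_mul hr1 f5 hT1 (by norm_num)
        exact mul_le_mul_of_nonneg_right h5 (by positivity)
  _ = (s+t) ^ (p-1) * (t - s) * (s ^ r * t ^ r) := by ring

lemma norm_add₄_le (x1 x2 x3 x4 : ℂ) :
    ‖x1 + x2 + x3 + x4‖ ≤ ‖x1‖ + ‖x2‖ + ‖x3‖ + ‖x4‖ := by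
  calc ‖x1 + x2 + x3 + x4‖ ≤ ‖x1 + x2 + x3‖ + ‖x4‖ := norm_add_le _ _
  _ ≤ (‖x1 + x2‖ + ‖x3‖) + ‖x4‖ := by
      have := norm_add_le (x1 + x2) x3; linarith
  _ ≤ ‖x1‖ + ‖x2‖ + ‖x3‖ + ‖x4‖ := by
      have := norm_add_le x1 x2; linarith

lemma norm_D_sub_apply_le_aux (p : ℝ) (hp1 : 1 ≤ p) (hp2 : p ≤ 2) (a b w : ℂ)
    (hab : ‖a‖ ≤ ‖b‖) :
    ‖D p a w - D p b w‖ ≤ 12 * ((‖a‖ + ‖b‖) ^ (p-1) * (‖a - b‖ * ‖w‖)) := by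
  rcases eq_or_ne b 0 with rfl | hb
  · have ha : a = 0 := norm_le_zero_iff.mp (by simpa using hab)
    subst ha
    simp
  · have ht : 0 < ‖b‖ := norm_pos_iff.mpr hb
    have hs0 : 0 ≤ ‖a‖ := norm_nonneg a
    set s := ‖a‖ with hsdef
    set t := ‖b‖ with htdef
    set E : ℝ := (s + t) ^ (p-1) * (‖a - b‖ * ‖w‖) with hEdef
    have hGnn : 0 ≤ (s + t) ^ (p-1) := Real.rpow_nonneg (by linarith) _
    have hw : 0 ≤ ‖w‖ := norm_nonneg w
    have habnn : 0 ≤ ‖a - b‖ := norm_nonneg _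
    have hE : 0 ≤ E := mul_nonneg hGnn (mul_nonneg habnn hw)
    have habn : t - s ≤ ‖a - b‖ := by
      have h := abs_norm_sub_norm_le b a
      rw [norm_sub_rev] at h
      have h2 := le_abs_self (t - s)
      simp only [← hsdef, ← htdef] at h
      linarith
    have hGle : t ^ (p-1) ≤ (s+t) ^ (p-1) :=
      Real.rpow_le_rpow ht.le (by linarith) (by linarith)
    have hTnn : 0 ≤ t ^ (p-1) := Real.rpow_nonneg ht.le _
    have hq : t ^ (p-2) * t = t ^ (p-1) := by
      rw [← Real.rpow_add_one ht.ne' (p-2)]; congr 1; ring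
    have hqnn : 0 ≤ t ^ (p-2) := Real.rpow_nonneg ht.le _
    have hid : D p a w - D p b w =
        ((s ^ p - t ^ p)) • w
        + ((p * (s ^ (p-2) - t ^ (p-2))) * ell a w) • a
        + ((p * t ^ (p-2)) * ell (a-b) w) • a
        + ((p * t ^ (p-2)) * ell b w) • (a - b) := by
      rw [D_apply, D_apply, ell_sub]
      module
    have hT1 : ‖((s ^ p - t ^ p)) • w‖ ≤ 2 * E := by
      rw [norm_smul, Real.norm_eq_abs]
      have hsp : s ^ p ≤ t ^ p := Real.rpow_le_rpow hs0 hab (by linarith)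
      have habs : |s ^ p - t ^ p| = t ^ p - s ^ p := by
        rw [abs_sub_comm, abs_of_nonneg (by linarith)]
      rw [habs]
      have h1 := rpow_sub_rpow_le p hp1 hs0 hab
      calc (t ^ p - s ^ p) * ‖w‖ ≤ (p * t ^ (p-1) * (t - s)) * ‖w‖ :=
            mul_le_mul_of_nonneg_right h1 hw
      _ ≤ (2 * ((s+t) ^ (p-1)) * ‖a - b‖) * ‖w‖ := by
            apply mul_le_mul_of_nonneg_right _ hw
            nlinarith [mul_nonneg (mul_nonneg (by linarith : (0:ℝ) ≤ 2-p) hTnn)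
                (by linarith : (0:ℝ) ≤ t-s),
              mul_nonneg (by linarith : (0:ℝ) ≤ (s+t)^(p-1) - t^(p-1))
                (by linarith : (0:ℝ) ≤ t-s),
              mul_nonneg hGnn (by linarith : (0:ℝ) ≤ ‖a-b‖ - (t-s))]
      _ = 2 * E := by rw [hEdef]; ring
    have hT2 : ‖((p * (s ^ (p-2) - t ^ (p-2))) * ell a w) • a‖ ≤ 2 * E := by
      rcases eq_or_lt_of_le hs0 with h0 | hspos
      · rw [norm_smul, ← hsdef, ← h0, mul_zero]
        linarith
      · rw [norm_smul, Real.norm_eq_abs, abs_mul, abs_mul,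
          abs_of_nonneg (by linarith : (0:ℝ) ≤ p), ← hsdef]
        have hmono : t ^ (p-2) ≤ s ^ (p-2) :=
          Real.rpow_le_rpow_of_nonpos hspos hab (by linarith)
        have hΔ : (0:ℝ) ≤ s ^ (p-2) - t ^ (p-2) := by linarith
        rw [abs_of_nonneg hΔ]
        have hell : |ell a w| ≤ s * ‖w‖ := abs_ell_le a w
        have hkey := rpow_neg_sub_le p hp1 hp2 hspos hab
        calc p * (s ^ (p-2) - t ^ (p-2)) * |ell a w| * s
            ≤ p * (s ^ (p-2) - t ^ (p-2)) * (s * ‖w‖) * s := by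
              apply mul_le_mul_of_nonneg_right _ hs0
              exact mul_le_mul_of_nonneg_left hell
                (mul_nonneg (by linarith) hΔ)
        _ = p * ((s ^ (p-2) - t ^ (p-2)) * (s * s)) * ‖w‖ := by ring
        _ ≤ p * ((s+t) ^ (p-1) * (t - s)) * ‖w‖ := by
              apply mul_le_mul_of_nonneg_right _ hw
              exact mul_le_mul_of_nonneg_left hkey (by linarith)
        _ ≤ 2 * E := by
              rw [hEdef]
              nlinarith [mul_nonneg (mul_nonneg (mul_nonneg
                  (by linarith : (0:ℝ) ≤ 2-p) hGnn) (by linarith : (0:ℝ) ≤ t-s)) hw,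
                mul_nonneg (mul_nonneg hGnn
                  (by linarith : (0:ℝ) ≤ ‖a-b‖ - (t-s))) hw]
    have hT3 : ‖((p * t ^ (p-2)) * ell (a-b) w) • a‖ ≤ 2 * E := by
      rw [norm_smul, Real.norm_eq_abs, abs_mul,
        abs_of_nonneg (by positivity : (0:ℝ) ≤ p * t ^ (p-2)), ← hsdef]
      have hell := abs_ell_le (a-b) w
      calc (p * t ^ (p-2)) * |ell (a-b) w| * s
          ≤ (p * t ^ (p-2)) * (‖a-b‖ * ‖w‖) * s :=
            mul_le_mul_of_nonneg_right
              (mul_le_mul_of_nonneg_left hell (by positivity)) hs0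
      _ ≤ (p * t ^ (p-2)) * (‖a-b‖ * ‖w‖) * t :=
            mul_le_mul_of_nonneg_left hab (by positivity)
      _ = p * (t ^ (p-2) * t) * (‖a-b‖ * ‖w‖) := by ring
      _ = p * t ^ (p-1) * (‖a-b‖ * ‖w‖) := by rw [hq]
      _ ≤ 2 * E := by
            rw [hEdef]
            nlinarith [mul_nonneg (mul_nonneg (by linarith : (0:ℝ) ≤ 2-p) hTnn)
                (mul_nonneg habnn hw),
              mul_nonneg (by linarith : (0:ℝ) ≤ (s+t)^(p-1) - t^(p-1))
                (mul_nonneg habnn hw)]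
    have hT4 : ‖((p * t ^ (p-2)) * ell b w) • (a - b)‖ ≤ 2 * E := by
      rw [norm_smul, Real.norm_eq_abs, abs_mul,
        abs_of_nonneg (by positivity : (0:ℝ) ≤ p * t ^ (p-2))]
      have hell : |ell b w| ≤ t * ‖w‖ := abs_ell_le b w
      calc (p * t ^ (p-2)) * |ell b w| * ‖a - b‖
          ≤ (p * t ^ (p-2)) * (t * ‖w‖) * ‖a - b‖ :=
            mul_le_mul_of_nonneg_right
              (mul_le_mul_of_nonneg_left hell (by positivity)) habnn
      _ = p * (t ^ (p-2) * t) * (‖w‖ * ‖a - b‖) := by ring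
      _ = p * t ^ (p-1) * (‖w‖ * ‖a - b‖) := by rw [hq]
      _ ≤ 2 * E := by
            rw [hEdef]
            nlinarith [mul_nonneg (mul_nonneg (by linarith : (0:ℝ) ≤ 2-p) hTnn)
                (mul_nonneg habnn hw),
              mul_nonneg (by linarith : (0:ℝ) ≤ (s+t)^(p-1) - t^(p-1))
                (mul_nonneg habnn hw)]
    rw [hid]
    have hsum := norm_add₄_le ((s ^ p - t ^ p) • w)
      (((p * (s ^ (p-2) - t ^ (p-2))) * ell a w) • a)
      (((p * t ^ (p-2)) * ell (a-b) w) • a)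
      (((p * t ^ (p-2)) * ell b w) • (a - b))
    calc _ ≤ _ := hsum
    _ ≤ 2*E + 2*E + 2*E + 2*E := by linarith
    _ ≤ 12 * E := by linarith

lemma norm_D_sub_apply_le (p : ℝ) (hp1 : 1 ≤ p) (hp2 : p ≤ 2) (a b w : ℂ) :
    ‖D p a w - D p b w‖ ≤ 12 * ((‖a‖ + ‖b‖) ^ (p-1) * (‖a - b‖ * ‖w‖)) := by
  rcases le_total ‖a‖ ‖b‖ with h | h
  · exact norm_D_sub_apply_le_aux p hp1 hp2 a b w h
  · have h2 := norm_D_sub_apply_le_aux p hp1 hp2 b a w h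
    calc ‖D p a w - D p b w‖ = ‖D p b w - D p a w‖ := norm_sub_rev _ _
    _ ≤ 12 * ((‖b‖ + ‖a‖) ^ (p-1) * (‖b - a‖ * ‖w‖)) := h2
    _ = 12 * ((‖a‖ + ‖b‖) ^ (p-1) * (‖a - b‖ * ‖w‖)) := by
        rw [add_comm (‖b‖), norm_sub_rev]

lemma key_pointwise (p : ℝ) (hp1 : 1 ≤ p) (hp2 : p ≤ 2) (a b w₁ w₂ : ℂ) :
    ‖D p a w₁ - D p b w₂‖
      ≤ 3 * (‖a‖ ^ p * ‖w₁ - w₂‖) + 12 * ((‖a‖ + ‖b‖) ^ (p-1) * (‖a - b‖ * ‖w₂‖)) := by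
  have h0 : D p a w₁ - D p b w₂ = D p a (w₁ - w₂) + (D p a w₂ - D p b w₂) := by
    rw [map_sub]
    abel
  rw [h0]
  calc ‖D p a (w₁ - w₂) + (D p a w₂ - D p b w₂)‖
      ≤ ‖D p a (w₁ - w₂)‖ + ‖D p a w₂ - D p b w₂‖ := norm_add_le _ _
  _ ≤ 3 * (‖a‖ ^ p * ‖w₁ - w₂‖) + 12 * ((‖a‖ + ‖b‖) ^ (p-1) * (‖a - b‖ * ‖w₂‖)) :=
      add_le_add (norm_D_apply_le p hp1 hp2 a (w₁ - w₂))
        (norm_D_sub_apply_le p hp1 hp2 a b w₂)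

open MeasureTheory in
lemma ae_norm_le_toReal {α : Type*} [MeasurableSpace α] {μ : Measure α} {f : α → ℂ}
    (h : eLpNorm f ⊤ μ ≠ ⊤) : ∀ᵐ x ∂μ, ‖f x‖ ≤ (eLpNorm f ⊤ μ).toReal := by
  rw [eLpNorm_exponent_top] at h ⊢
  filter_upwards [ae_le_eLpNormEssSup (f := f) (μ := μ)] with x hx
  have h2 := ENNReal.toReal_mono h hx
  simpa using h2

open MeasureTheory in
lemma eLpNormTop_ne_top_of_bounded {α : Type*} [MeasurableSpace α] {μ : Measure α}
    {f : α → ℂ} {M : ℝ} (hM : ∀ x, ‖f x‖ ≤ M) : eLpNorm f ⊤ μ ≠ ⊤ := by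
  rw [eLpNorm_exponent_top]
  exact ((eLpNormEssSup_le_of_ae_bound (C := M)
    (Filter.Eventually.of_forall hM)).trans_lt ENNReal.ofReal_lt_top).ne

end CritAux

open ENNReal in
/-- First-derivative estimate underlying part (ii) of the nonlinear estimates lemma: for
`d ∈ {2,3}` there is `C > 0` (depending only on `d` and `n`) such that for all bounded `C¹`
functions `u v : ℝⁿ → ℂ` with bounded derivatives and every coordinate direction `i`,
`‖∂ᵢ(|u|^{4/d}u) − ∂ᵢ(|v|^{4/d}v)‖_{L²} ≤ C ( ‖∂ᵢ(u−v)‖_{L²} ‖u‖_∞^{4/d}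
  + ‖∂ᵢv‖_{L²} ‖u−v‖_∞ (‖u‖_∞ + ‖v‖_∞)^{4/d−1} )`. -/
theorem critical_nonlinearity_first_derivative_estimate (d n : ℕ) (hd : d = 2 ∨ d = 3) :
    ∃ C : ℝ, 0 < C ∧ ∀ u v : EuclideanSpace ℝ (Fin n) → ℂ,
      ContDiff ℝ 1 u → ContDiff ℝ 1 v →
      (∃ M : ℝ, ∀ x, ‖u x‖ ≤ M ∧ ‖fderiv ℝ u x‖ ≤ M) →
      (∃ M : ℝ, ∀ x, ‖v x‖ ≤ M ∧ ‖fderiv ℝ v x‖ ≤ M) →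
      ∀ i : Fin n,
      eLpNorm (fun x =>
          fderiv ℝ (fun y => ((‖u y‖ ^ ((4 : ℝ) / d) : ℝ) : ℂ) * u y) x
            (EuclideanSpace.single i 1)
          - fderiv ℝ (fun y => ((‖v y‖ ^ ((4 : ℝ) / d) : ℝ) : ℂ) * v y) x
            (EuclideanSpace.single i 1)) 2 volume
        ≤ ENNReal.ofReal C *
          (eLpNorm (fun x => fderiv ℝ (fun y => u y - v y) x (EuclideanSpace.single i 1))
              2 volume * (eLpNorm u ⊤ volume) ^ ((4 : ℝ) / d)
            + eLpNorm (fun x => fderiv ℝ v x (EuclideanSpace.single i 1)) 2 volume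
              * eLpNorm (fun x => u x - v x) ⊤ volume
              * (eLpNorm u ⊤ volume + eLpNorm v ⊤ volume) ^ ((4 : ℝ) / d - 1)) := by
  refine ⟨12, by norm_num, ?_⟩
  intro u v hu hv hubd hvbd i
  set p : ℝ := (4 : ℝ) / d with hpdef
  have hp1 : 1 ≤ p := by rcases hd with rfl | rfl <;> norm_num [hpdef]
  have hp2 : p ≤ 2 := by rcases hd with rfl | rfl <;> norm_num [hpdef]
  set e : EuclideanSpace ℝ (Fin n) := EuclideanSpace.single i (1:ℝ) with hedef
  obtain ⟨Mu, hMu⟩ := hubd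
  obtain ⟨Mv, hMv⟩ := hvbd
  have hNu_ne : eLpNorm u ⊤ volume ≠ ⊤ :=
    CritAux.eLpNormTop_ne_top_of_bounded (fun x => (hMu x).1)
  have hNv_ne : eLpNorm v ⊤ volume ≠ ⊤ :=
    CritAux.eLpNormTop_ne_top_of_bounded (fun x => (hMv x).1)
  have hNuv_ne : eLpNorm (fun x => u x - v x) ⊤ volume ≠ ⊤ :=
    CritAux.eLpNormTop_ne_top_of_bounded (M := Mu + Mv) (fun x => by
      calc ‖u x - v x‖ ≤ ‖u x‖ + ‖v x‖ := norm_sub_le _ _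
      _ ≤ Mu + Mv := add_le_add (hMu x).1 (hMv x).1)
  set A : ℝ := (eLpNorm u ⊤ volume).toReal with hAdef
  set B : ℝ := (eLpNorm v ⊤ volume).toReal with hBdef
  set Cc : ℝ := (eLpNorm (fun x => u x - v x) ⊤ volume).toReal with hCcdef
  have hA0 : 0 ≤ A := ENNReal.toReal_nonneg
  have hB0 : 0 ≤ B := ENNReal.toReal_nonneg
  have hCc0 : 0 ≤ Cc := ENNReal.toReal_nonneg
  have hau : ∀ᵐ x ∂(volume : Measure (EuclideanSpace ℝ (Fin n))), ‖u x‖ ≤ A :=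
    CritAux.ae_norm_le_toReal hNu_ne
  have hav : ∀ᵐ x ∂(volume : Measure (EuclideanSpace ℝ (Fin n))), ‖v x‖ ≤ B :=
    CritAux.ae_norm_le_toReal hNv_ne
  have hauv : ∀ᵐ x ∂(volume : Measure (EuclideanSpace ℝ (Fin n))), ‖u x - v x‖ ≤ Cc :=
    CritAux.ae_norm_le_toReal hNuv_ne
  have hud : Differentiable ℝ u := hu.differentiable one_ne_zero
  have hvd : Differentiable ℝ v := hv.differentiable one_ne_zero
  have hfu : ∀ x, fderiv ℝ (fun y => ((‖u y‖ ^ p : ℝ) : ℂ) * u y) x =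
      (CritAux.D p (u x)).comp (fderiv ℝ u x) := fun x =>
    (((CritAux.hasFDerivAt_F p hp1 (u x)).comp x (hud x).hasFDerivAt)).fderiv
  have hfv : ∀ x, fderiv ℝ (fun y => ((‖v y‖ ^ p : ℝ) : ℂ) * v y) x =
      (CritAux.D p (v x)).comp (fderiv ℝ v x) := fun x =>
    (((CritAux.hasFDerivAt_F p hp1 (v x)).comp x (hvd x).hasFDerivAt)).fderiv
  have hfsub : ∀ x, fderiv ℝ (fun y => u y - v y) x = fderiv ℝ u x - fderiv ℝ v x :=
    fun x => ((hud x).hasFDerivAt.sub (hvd x).hasFDerivAt).fderiv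
  set h₁ : EuclideanSpace ℝ (Fin n) → ℝ :=
    fun x => ‖fderiv ℝ (fun y => u y - v y) x e‖ with h₁def
  set h₂ : EuclideanSpace ℝ (Fin n) → ℝ := fun x => ‖fderiv ℝ v x e‖ with h₂def
  set C₁ : ℝ := 3 * A ^ p with hC₁def
  set C₂ : ℝ := 12 * ((A + B) ^ (p-1) * Cc) with hC₂def
  have hC₁0 : 0 ≤ C₁ := by
    rw [hC₁def]; positivity
  have hC₂0 : 0 ≤ C₂ := by
    rw [hC₂def]
    have : (0:ℝ) ≤ (A + B) ^ (p-1) := Real.rpow_nonneg (by linarith) _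
    positivity
  -- pointwise bound
  have hae : ∀ᵐ x ∂(volume : Measure (EuclideanSpace ℝ (Fin n))),
      ‖fderiv ℝ (fun y => ((‖u y‖ ^ p : ℝ) : ℂ) * u y) x e
        - fderiv ℝ (fun y => ((‖v y‖ ^ p : ℝ) : ℂ) * v y) x e‖
      ≤ (C₁ • h₁ + C₂ • h₂) x := by
    filter_upwards [hau, hav, hauv] with x hxu hxv hxuv
    rw [hfu x, hfv x]
    have hsubapp : fderiv ℝ u x e - fderiv ℝ v x e
        = fderiv ℝ (fun y => u y - v y) x e := by
      rw [hfsub x, ContinuousLinearMap.sub_apply]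
    have hkey := CritAux.key_pointwise p hp1 hp2 (u x) (v x)
      (fderiv ℝ u x e) (fderiv ℝ v x e)
    rw [hsubapp] at hkey
    have hb1 : ‖u x‖ ^ p ≤ A ^ p :=
      Real.rpow_le_rpow (norm_nonneg _) hxu (by linarith)
    have hb2 : (‖u x‖ + ‖v x‖) ^ (p-1) ≤ (A + B) ^ (p-1) :=
      Real.rpow_le_rpow (by positivity) (by linarith) (by linarith)
    have hnn1 : (0:ℝ) ≤ ‖u x‖ ^ p := Real.rpow_nonneg (norm_nonneg _) _
    have hnn2 : (0:ℝ) ≤ (‖u x‖ + ‖v x‖) ^ (p-1) := Real.rpow_nonneg (by positivity) _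
    have hnn2' : (0:ℝ) ≤ (A + B) ^ (p-1) := Real.rpow_nonneg (by linarith) _
    have hstep : 3 * (‖u x‖ ^ p * h₁ x)
          + 12 * ((‖u x‖ + ‖v x‖) ^ (p-1) * (‖u x - v x‖ * h₂ x))
        ≤ C₁ * h₁ x + C₂ * h₂ x := by
      rw [hC₁def, hC₂def]
      have hh₁ : (0:ℝ) ≤ h₁ x := norm_nonneg _
      have hh₂ : (0:ℝ) ≤ h₂ x := norm_nonneg _
      have t1 : ‖u x‖ ^ p * h₁ x ≤ A ^ p * h₁ x :=
        mul_le_mul_of_nonneg_right hb1 hh₁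
      have t2 : (‖u x‖ + ‖v x‖) ^ (p-1) * (‖u x - v x‖ * h₂ x)
          ≤ (A + B) ^ (p-1) * (Cc * h₂ x) := by
        apply mul_le_mul hb2 _ (by positivity) hnn2'
        exact mul_le_mul_of_nonneg_right hxuv hh₂
      nlinarith [t1, t2]
    have hexp : (C₁ • h₁ + C₂ • h₂) x = C₁ * h₁ x + C₂ * h₂ x := rfl
    rw [hexp]
    exact le_trans hkey hstep
  have hcont₁ : Continuous fun x => fderiv ℝ (fun y => u y - v y) x e :=
    ((hu.sub hv).continuous_fderiv one_ne_zero).clm_apply continuous_const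
  have hcont₂ : Continuous fun x => fderiv ℝ v x e :=
    (hv.continuous_fderiv one_ne_zero).clm_apply continuous_const
  have hm1 : AEStronglyMeasurable (C₁ • h₁) volume := by
    exact ((hcont₁.norm).const_smul C₁).aestronglyMeasurable
  have hm2 : AEStronglyMeasurable (C₂ • h₂) volume := by
    exact ((hcont₂.norm).const_smul C₂).aestronglyMeasurable
  -- assemble
  set Nu := eLpNorm u ⊤ volume with hNudef
  set Nv := eLpNorm v ⊤ volume with hNvdef
  set Nuv := eLpNorm (fun x => u x - v x) ⊤ volume with hNuvdef
  set T₁ := eLpNorm (fun x => fderiv ℝ (fun y => u y - v y) x e) 2 volume with hT₁def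
  set T₂ := eLpNorm (fun x => fderiv ℝ v x e) 2 volume with hT₂def
  have hcoef₁ : (‖C₁‖₊ : ℝ≥0∞) = ENNReal.ofReal 3 * Nu ^ p := by
    rw [← enorm_eq_nnnorm, Real.enorm_eq_ofReal hC₁0, hC₁def, ENNReal.ofReal_mul (by norm_num),
      ← ENNReal.ofReal_rpow_of_nonneg hA0 (by linarith : (0:ℝ) ≤ p), hAdef,
      ENNReal.ofReal_toReal hNu_ne]
  have hcoef₂ : (‖C₂‖₊ : ℝ≥0∞) = ENNReal.ofReal 12 * ((Nu + Nv) ^ (p-1) * Nuv) := by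
    have hABnn : (0:ℝ) ≤ (A + B) ^ (p-1) := Real.rpow_nonneg (by linarith) _
    rw [← enorm_eq_nnnorm, Real.enorm_eq_ofReal hC₂0, hC₂def, ENNReal.ofReal_mul (by norm_num),
      ENNReal.ofReal_mul hABnn,
      ← ENNReal.ofReal_rpow_of_nonneg (by linarith : (0:ℝ) ≤ A + B)
        (by linarith : (0:ℝ) ≤ p - 1),
      ENNReal.ofReal_add hA0 hB0, hAdef, hBdef, hCcdef,
      ENNReal.ofReal_toReal hNu_ne, ENNReal.ofReal_toReal hNv_ne,
      ENNReal.ofReal_toReal hNuv_ne]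
  calc eLpNorm (fun x =>
          fderiv ℝ (fun y => ((‖u y‖ ^ p : ℝ) : ℂ) * u y) x e
          - fderiv ℝ (fun y => ((‖v y‖ ^ p : ℝ) : ℂ) * v y) x e) 2 volume
      ≤ eLpNorm (C₁ • h₁ + C₂ • h₂) 2 volume := eLpNorm_mono_ae_real hae
  _ ≤ eLpNorm (C₁ • h₁) 2 volume + eLpNorm (C₂ • h₂) 2 volume :=
      eLpNorm_add_le hm1 hm2 one_le_two
  _ = (‖C₁‖₊ : ℝ≥0∞) * eLpNorm h₁ 2 volume + (‖C₂‖₊ : ℝ≥0∞) * eLpNorm h₂ 2 volume := by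
      rw [eLpNorm_const_smul, eLpNorm_const_smul, enorm_eq_nnnorm, enorm_eq_nnnorm]
  _ = (‖C₁‖₊ : ℝ≥0∞) * T₁ + (‖C₂‖₊ : ℝ≥0∞) * T₂ := by
      rw [h₁def, h₂def, eLpNorm_norm, eLpNorm_norm]
  _ = ENNReal.ofReal 3 * Nu ^ p * T₁
      + ENNReal.ofReal 12 * ((Nu + Nv) ^ (p-1) * Nuv) * T₂ := by
      rw [hcoef₁, hcoef₂]
  _ ≤ ENNReal.ofReal 12 * (T₁ * Nu ^ p + T₂ * Nuv * (Nu + Nv) ^ (p-1)) := by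
      rw [mul_add]
      apply add_le_add
      · calc ENNReal.ofReal 3 * Nu ^ p * T₁ ≤ ENNReal.ofReal 12 * Nu ^ p * T₁ := by
              gcongr
              norm_num
        _ = ENNReal.ofReal 12 * (T₁ * Nu ^ p) := by ring
      · apply le_of_eq
        ring

end
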